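/- For every N_E with 0 < N_E < 1/τ_E one has A < −b_E^E/√a_E + (b_I^E/√a_E)·N_I'(N_E) < B, where A := −b_E^E/√a_E + (b_I^E/√a_E) · b_E^I N_I(0)² I(1/τ_E) / (√a_I + b_I^I N_I(1/τ_E)² I(0)) and B := −b_E^E/√a_E + (b_I^E/√a_E) · b_E^I N_I(1/τ_E)² I(0) / (√a_I + b_I^I N_I(0)² I(1/τ_E)). -/

import Mathlib

/-- K(w_R, w_F) := ∫_0^∞ (e^{-s²/2}/s)(e^{s·w_F} − e^{s·w_R}) ds (Lebesgue integral on (0,∞)). -/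
noncomputable def K (wR wF : ℝ) : ℝ :=
  ∫ s in Set.Ioi (0 : ℝ), Real.exp (-s ^ 2 / 2) / s * (Real.exp (s * wF) - Real.exp (s * wR))

/-- I₂(N_E,N_I) with V_0^I(N_E,N_I) := b_E^I N_E − b_I^I N_I + (b_E^I − b_E^E) ν_{E,ext}. -/
noncomputable def I2 (VR VF bEE bEI bII aI ν NE NI : ℝ) : ℝ :=
  K ((VR - (bEI * NE - bII * NI + (bEI - bEE) * ν)) / Real.sqrt aI)
    ((VF - (bEI * NE - bII * NI + (bEI - bEE) * ν)) / Real.sqrt aI)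

/-- I(N_E) := ∫_0^∞ e^{-s²/2} · exp(−(b_E^I N_E − b_I^I N_I(N_E) + (b_E^I − b_E^E)ν)s/√a_I)
· (e^{s V_F/√a_I} − e^{s V_R/√a_I}) ds, where N_I(·) is the implicitly defined function. -/
noncomputable def Ifun (VR VF bEE bEI bII aI ν : ℝ) (NIfun : ℝ → ℝ) (NE : ℝ) : ℝ :=
  ∫ s in Set.Ioi (0 : ℝ),
    Real.exp (-s ^ 2 / 2) *
      Real.exp (-((bEI * NE - bII * NIfun NE + (bEI - bEE) * ν) * s) / Real.sqrt aI) *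
      (Real.exp (s * VF / Real.sqrt aI) - Real.exp (s * VR / Real.sqrt aI))

/-- N_I'(N_E) = b_E^I N_I(N_E)² I(N_E)/(√a_I + b_I^I N_I(N_E)² I(N_E)). -/
noncomputable def NIderiv (VR VF bEE bEI bII aI ν : ℝ) (NIfun : ℝ → ℝ) (NE : ℝ) : ℝ :=
  bEI * (NIfun NE) ^ 2 * Ifun VR VF bEE bEI bII aI ν NIfun NE /
    (Real.sqrt aI + bII * (NIfun NE) ^ 2 * Ifun VR VF bEE bEI bII aI ν NIfun NE)


open MeasureTheory Set Real

lemma aux_int1 (r : ℝ) : IntegrableOn (fun s => Real.exp (-s^2/2) * Real.exp (r*s)) (Set.Ioi 0) := by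
  have h0 : Integrable (fun x : ℝ => Real.exp (-(1/2) * x^2)) := integrable_exp_neg_mul_sq (by norm_num)
  have h1 : Integrable (fun x : ℝ => Real.exp (-(1/2) * (x - r)^2)) := h0.comp_sub_right r
  have h2 : Integrable (fun x : ℝ => Real.exp (r^2/2) * Real.exp (-(1/2) * (x - r)^2)) := h1.const_mul _
  have he : (fun s : ℝ => Real.exp (-s^2/2) * Real.exp (r*s)) = fun x => Real.exp (r^2/2) * Real.exp (-(1/2) * (x - r)^2) := by
    funext x; rw [← Real.exp_add, ← Real.exp_add]; ring_nf
  rw [he]; exact h2.integrableOn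

lemma aux_expsub {x y : ℝ} (h : y ≤ x) : Real.exp x - Real.exp y ≤ (x - y) * Real.exp x := by
  have h1 := Real.add_one_le_exp (y - x)
  have h2 : Real.exp x * Real.exp (y - x) = Real.exp y := by rw [← Real.exp_add]; ring_nf
  nlinarith [Real.exp_pos x]

lemma aux_intK {wR wF : ℝ} (h : wR < wF) :
    IntegrableOn (fun s => Real.exp (-s^2/2) / s * (Real.exp (s*wF) - Real.exp (s*wR))) (Set.Ioi 0) := by
  have hmeas : AEStronglyMeasurable
      (fun s => Real.exp (-s^2/2) / s * (Real.exp (s*wF) - Real.exp (s*wR)))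
      (volume.restrict (Set.Ioi 0)) := by
    apply Measurable.aestronglyMeasurable
    measurability
  have hbd : Integrable (fun s => (wF - wR) * (Real.exp (-s^2/2) * Real.exp (wF*s)))
      (volume.restrict (Set.Ioi 0)) := (aux_int1 wF).const_mul _
  refine hbd.mono' hmeas ?_
  rw [ae_restrict_iff' measurableSet_Ioi]
  filter_upwards with s hs
  have hs0 : (0:ℝ) < s := hs
  have hle : s * wR ≤ s * wF := by nlinarith
  have hnn : 0 ≤ Real.exp (-s^2/2) / s * (Real.exp (s*wF) - Real.exp (s*wR)) := by
    apply mul_nonneg (by positivity)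
    linarith [Real.exp_le_exp.2 hle]
  rw [Real.norm_eq_abs, abs_of_nonneg hnn]
  have h2 : Real.exp (s*wF) - Real.exp (s*wR) ≤ (s * (wF - wR)) * Real.exp (s*wF) := by
    calc Real.exp (s*wF) - Real.exp (s*wR) ≤ (s*wF - s*wR) * Real.exp (s*wF) := aux_expsub hle
    _ = (s * (wF - wR)) * Real.exp (s*wF) := by ring
  calc Real.exp (-s^2/2) / s * (Real.exp (s*wF) - Real.exp (s*wR))
      ≤ Real.exp (-s^2/2) / s * ((s * (wF - wR)) * Real.exp (s*wF)) := by
        apply mul_le_mul_of_nonneg_left h2 (by positivity)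
    _ = (wF - wR) * (Real.exp (-s^2/2) * Real.exp (wF*s)) := by
        field_simp

lemma aux_pos {f : ℝ → ℝ} (hint : IntegrableOn f (Set.Ioi 0))
    (hpos : ∀ s ∈ Set.Ioi (0:ℝ), 0 < f s) : 0 < ∫ s in Set.Ioi (0:ℝ), f s := by
  rw [setIntegral_pos_iff_support_of_nonneg_ae ?h1 hint]
  · apply lt_of_lt_of_le _ (measure_mono (show Set.Ioi (0:ℝ) ⊆ Function.support f ∩ Set.Ioi 0 from
      fun x hx => ⟨ne_of_gt (hpos x hx), hx⟩))
    rw [Real.volume_Ioi]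
    exact ENNReal.zero_lt_top
  case h1 =>
    refine (ae_restrict_iff' measurableSet_Ioi).2 ?_
    filter_upwards with s hs
    exact le_of_lt (hpos s hs)

lemma aux_K_lt {wR wF t : ℝ} (h : wR < wF) (ht : 0 < t) :
    K (wR - t) (wF - t) < K wR wF := by
  have hint1 := aux_intK (sub_lt_sub_right h t)
  have hint2 := aux_intK h
  unfold K
  rw [← sub_pos, ← integral_sub hint2 hint1]
  apply aux_pos (hint2.sub hint1)
  intro s hs
  have hs0 : (0:ℝ) < s := hs
  have key : Real.exp (s*(wF - t)) - Real.exp (s*(wR - t))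
      = Real.exp (-(s*t)) * (Real.exp (s*wF) - Real.exp (s*wR)) := by
    simp only [mul_sub, ← Real.exp_add]; ring_nf
  have h2 : 0 < Real.exp (s*wF) - Real.exp (s*wR) := by
    have := Real.exp_lt_exp.2 (show s*wR < s*wF by nlinarith)
    linarith
  have hlt : Real.exp (s*(wF-t)) - Real.exp (s*(wR-t)) < Real.exp (s*wF) - Real.exp (s*wR) := by
    rw [key]
    have h1 : Real.exp (-(s*t)) < 1 := by rw [Real.exp_lt_one_iff]; nlinarith
    nlinarith
  have hpos : 0 < Real.exp (-s^2/2)/s := by positivity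
  simp only [Pi.sub_apply]
  have : Real.exp (-s^2/2)/s * (Real.exp (s*wF) - Real.exp (s*wR))
      - Real.exp (-s^2/2)/s * (Real.exp (s*(wF-t)) - Real.exp (s*(wR-t)))
      = Real.exp (-s^2/2)/s * ((Real.exp (s*wF) - Real.exp (s*wR)) - (Real.exp (s*(wF-t)) - Real.exp (s*(wR-t)))) := by ring
  rw [this]
  exact mul_pos hpos (by linarith)

lemma aux_K_le {wR wF t : ℝ} (h : wR < wF) (ht : 0 ≤ t) :
    K (wR - t) (wF - t) ≤ K wR wF := by
  rcases eq_or_lt_of_le ht with rfl | ht'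
  · simp
  · exact (aux_K_lt h ht').le

lemma aux_J_int (VR VF sa v : ℝ) :
    IntegrableOn (fun s => Real.exp (-s^2/2) * Real.exp (-(v*s)/sa) *
      (Real.exp (s*VF/sa) - Real.exp (s*VR/sa))) (Set.Ioi 0) := by
  have he : (fun s => Real.exp (-s^2/2) * Real.exp (-(v*s)/sa) *
      (Real.exp (s*VF/sa) - Real.exp (s*VR/sa)))
      = fun s => Real.exp (-s^2/2) * Real.exp (((VF - v)/sa)*s)
        - Real.exp (-s^2/2) * Real.exp (((VR - v)/sa)*s) := by
    funext s
    rw [mul_sub]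
    simp only [← Real.exp_add]
    ring_nf
  rw [he]
  exact (aux_int1 _).sub (aux_int1 _)

lemma aux_J_pos {VR VF sa : ℝ} (hV : VR < VF) (hsa : 0 < sa) (v : ℝ) :
    0 < ∫ s in Set.Ioi (0:ℝ), Real.exp (-s^2/2) * Real.exp (-(v*s)/sa) *
      (Real.exp (s*VF/sa) - Real.exp (s*VR/sa)) := by
  apply aux_pos (aux_J_int VR VF sa v)
  intro s hs
  have hs0 : (0:ℝ) < s := hs
  have h2 : 0 < Real.exp (s*VF/sa) - Real.exp (s*VR/sa) := by
    have h3 : s*VR/sa < s*VF/sa := (div_lt_div_iff_of_pos_right hsa).2 (by nlinarith)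
    linarith [Real.exp_lt_exp.2 h3]
  have e1 := Real.exp_pos (-s^2/2)
  have e2 := Real.exp_pos (-(v*s)/sa)
  positivity

lemma aux_J_lt {VR VF sa : ℝ} (hV : VR < VF) (hsa : 0 < sa) {u v : ℝ} (huv : u < v) :
    (∫ s in Set.Ioi (0:ℝ), Real.exp (-s^2/2) * Real.exp (-(v*s)/sa) *
      (Real.exp (s*VF/sa) - Real.exp (s*VR/sa)))
    < ∫ s in Set.Ioi (0:ℝ), Real.exp (-s^2/2) * Real.exp (-(u*s)/sa) *
      (Real.exp (s*VF/sa) - Real.exp (s*VR/sa)) := by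
  rw [← sub_pos, ← integral_sub (aux_J_int VR VF sa u) (aux_J_int VR VF sa v)]
  apply aux_pos ((aux_J_int VR VF sa u).sub (aux_J_int VR VF sa v))
  intro s hs
  have hs0 : (0:ℝ) < s := hs
  have h2 : 0 < Real.exp (s*VF/sa) - Real.exp (s*VR/sa) := by
    have h3 : s*VR/sa < s*VF/sa := (div_lt_div_iff_of_pos_right hsa).2 (by nlinarith)
    linarith [Real.exp_lt_exp.2 h3]
  have h1 : Real.exp (-(v*s)/sa) < Real.exp (-(u*s)/sa) :=
    Real.exp_lt_exp.2 ((div_lt_div_iff_of_pos_right hsa).2 (by nlinarith))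
  simp only [Pi.sub_apply]
  have key : Real.exp (-s^2/2) * Real.exp (-(u*s)/sa) * (Real.exp (s*VF/sa) - Real.exp (s*VR/sa))
      - Real.exp (-s^2/2) * Real.exp (-(v*s)/sa) * (Real.exp (s*VF/sa) - Real.exp (s*VR/sa))
      = Real.exp (-s^2/2) * (Real.exp (-(u*s)/sa) - Real.exp (-(v*s)/sa)) *
        (Real.exp (s*VF/sa) - Real.exp (s*VR/sa)) := by ring
  rw [key]
  exact mul_pos (mul_pos (Real.exp_pos _) (by linarith)) h2

lemma aux_frac2 {bEI bII sa P Q R : ℝ} (hbEI : 0 < bEI) (hbII : 0 < bII) (hsa : 0 < sa)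
    (hP : 0 < P) (hPQ : P < Q) (hQR : Q < R) :
    bEI * P / (sa + bII * R) < bEI * Q / (sa + bII * Q) ∧
    bEI * Q / (sa + bII * Q) < bEI * R / (sa + bII * P) := by
  have hQ : 0 < Q := by linarith
  have hR : 0 < R := by linarith
  have hcross : P * Q < Q * R := by nlinarith [mul_pos hQ (sub_pos.2 (lt_trans hPQ hQR))]
  have hd1 : 0 < sa + bII * R := by nlinarith [mul_pos hbII hR]
  have hd2 : 0 < sa + bII * Q := by nlinarith [mul_pos hbII hQ]
  have hd3 : 0 < sa + bII * P := by nlinarith [mul_pos hbII hP]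
  constructor
  · rw [div_lt_div_iff₀ hd1 hd2]
    nlinarith [mul_pos (mul_pos hbEI hsa) (sub_pos.2 hPQ),
      mul_pos (mul_pos hbEI hbII) (sub_pos.2 hcross)]
  · rw [div_lt_div_iff₀ hd2 hd3]
    nlinarith [mul_pos (mul_pos hbEI hsa) (sub_pos.2 hQR),
      mul_pos (mul_pos hbEI hbII) (sub_pos.2 hcross)]

lemma aux_frac {bEI bII sa N0 Nm N1 I0 Im I1 : ℝ} (hbEI : 0 < bEI) (hbII : 0 < bII)
    (hsa : 0 < sa) (hN0 : 0 < N0) (h01 : N0 < Nm) (h12 : Nm < N1)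
    (hi2 : 0 < I1) (hi12 : I1 < Im) (hi01 : Im < I0) :
    bEI * N0^2 * I1 / (sa + bII * N1^2 * I0) < bEI * Nm^2 * Im / (sa + bII * Nm^2 * Im) ∧
    bEI * Nm^2 * Im / (sa + bII * Nm^2 * Im) < bEI * N1^2 * I0 / (sa + bII * N0^2 * I1) := by
  have hNm : 0 < Nm := by linarith
  have hN1 : 0 < N1 := by linarith
  have hIm : 0 < Im := by linarith
  have hI0 : 0 < I0 := by linarith
  have hsq1 : N0^2 < Nm^2 := by nlinarith
  have hsq2 : Nm^2 < N1^2 := by nlinarith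
  have hP : 0 < N0^2 * I1 := mul_pos (pow_pos hN0 2) hi2
  have hPQ : N0^2 * I1 < Nm^2 * Im := by
    nlinarith [mul_pos (pow_pos hNm 2) (sub_pos.2 hi12), mul_pos (sub_pos.2 hsq1) hi2]
  have hQR : Nm^2 * Im < N1^2 * I0 := by
    nlinarith [mul_pos (pow_pos hN1 2) (sub_pos.2 hi01), mul_pos (sub_pos.2 hsq2) hIm]
  have := aux_frac2 (sa := sa) hbEI hbII hsa hP hPQ hQR
  simpa only [← mul_assoc] using this

theorem A_lt_deriv_term_lt_B (VR VF bEE bIE bEI bII τE τI aE aI ν : ℝ)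
    (hV : VR < VF) (hbEE : 0 < bEE) (hbIE : 0 < bIE) (hbEI : 0 < bEI) (hbII : 0 < bII)
    (hτE : 0 < τE) (hτI : 0 < τI) (haE : 0 < aE) (haI : 0 < aI) (hν : 0 ≤ ν)
    (NIfun : ℝ → ℝ)
    (hNIfun : ∀ NE : ℝ, 0 ≤ NE → NIfun NE ∈ Set.Ioo 0 (1 / τI) ∧
      NIfun NE * (τI + I2 VR VF bEE bEI bII aI ν NE (NIfun NE)) = 1) :
    ∀ NE ∈ Set.Ioo (0 : ℝ) (1 / τE),
      (-(bEE / Real.sqrt aE) + bIE / Real.sqrt aE *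
          (bEI * (NIfun 0) ^ 2 * Ifun VR VF bEE bEI bII aI ν NIfun (1 / τE) /
            (Real.sqrt aI + bII * (NIfun (1 / τE)) ^ 2 * Ifun VR VF bEE bEI bII aI ν NIfun 0)) <
        -(bEE / Real.sqrt aE) + bIE / Real.sqrt aE * NIderiv VR VF bEE bEI bII aI ν NIfun NE) ∧
      (-(bEE / Real.sqrt aE) + bIE / Real.sqrt aE * NIderiv VR VF bEE bEI bII aI ν NIfun NE <
        -(bEE / Real.sqrt aE) + bIE / Real.sqrt aE *
          (bEI * (NIfun (1 / τE)) ^ 2 * Ifun VR VF bEE bEI bII aI ν NIfun 0 /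
            (Real.sqrt aI + bII * (NIfun 0) ^ 2 * Ifun VR VF bEE bEI bII aI ν NIfun (1 / τE)))) := by
  have hsa : 0 < Real.sqrt aI := Real.sqrt_pos.2 haI
  -- strict monotonicity of NIfun
  have hmono : ∀ x y : ℝ, 0 ≤ x → x < y → NIfun x < NIfun y := by
    intro x y hx hxy
    obtain ⟨⟨hx0, _⟩, hxeq⟩ := hNIfun x hx
    obtain ⟨⟨hy0, _⟩, hyeq⟩ := hNIfun y (by linarith)
    by_contra hcon
    push_neg at hcon
    have hVlt : (bEI * x - bII * NIfun x + (bEI - bEE) * ν)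
        < (bEI * y - bII * NIfun y + (bEI - bEE) * ν) := by nlinarith
    have hI2 : I2 VR VF bEE bEI bII aI ν y (NIfun y) < I2 VR VF bEE bEI bII aI ν x (NIfun x) := by
      unfold I2
      have e1 : (VR - (bEI * y - bII * NIfun y + (bEI - bEE) * ν)) / Real.sqrt aI
          = (VR - (bEI * x - bII * NIfun x + (bEI - bEE) * ν)) / Real.sqrt aI
            - ((bEI * y - bII * NIfun y + (bEI - bEE) * ν)
              - (bEI * x - bII * NIfun x + (bEI - bEE) * ν)) / Real.sqrt aI := by ring
      have e2 : (VF - (bEI * y - bII * NIfun y + (bEI - bEE) * ν)) / Real.sqrt aI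
          = (VF - (bEI * x - bII * NIfun x + (bEI - bEE) * ν)) / Real.sqrt aI
            - ((bEI * y - bII * NIfun y + (bEI - bEE) * ν)
              - (bEI * x - bII * NIfun x + (bEI - bEE) * ν)) / Real.sqrt aI := by ring
      rw [e1, e2]
      exact aux_K_lt ((div_lt_div_iff_of_pos_right hsa).2 (by linarith)) (div_pos (by linarith) hsa)
    have hpx : 0 < τI + I2 VR VF bEE bEI bII aI ν x (NIfun x) := by nlinarith
    nlinarith
  -- strict monotonicity of V0 along the curve
  have hVmono : ∀ x y : ℝ, 0 ≤ x → x < y →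
      (bEI * x - bII * NIfun x + (bEI - bEE) * ν)
        < (bEI * y - bII * NIfun y + (bEI - bEE) * ν) := by
    intro x y hx hxy
    obtain ⟨⟨hx0, _⟩, hxeq⟩ := hNIfun x hx
    obtain ⟨⟨hy0, _⟩, hyeq⟩ := hNIfun y (by linarith)
    have hN := hmono x y hx hxy
    by_contra hcon
    push_neg at hcon
    have hI2 : I2 VR VF bEE bEI bII aI ν x (NIfun x) ≤ I2 VR VF bEE bEI bII aI ν y (NIfun y) := by
      unfold I2
      have e1 : (VR - (bEI * x - bII * NIfun x + (bEI - bEE) * ν)) / Real.sqrt aI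
          = (VR - (bEI * y - bII * NIfun y + (bEI - bEE) * ν)) / Real.sqrt aI
            - ((bEI * x - bII * NIfun x + (bEI - bEE) * ν)
              - (bEI * y - bII * NIfun y + (bEI - bEE) * ν)) / Real.sqrt aI := by ring
      have e2 : (VF - (bEI * x - bII * NIfun x + (bEI - bEE) * ν)) / Real.sqrt aI
          = (VF - (bEI * y - bII * NIfun y + (bEI - bEE) * ν)) / Real.sqrt aI
            - ((bEI * x - bII * NIfun x + (bEI - bEE) * ν)
              - (bEI * y - bII * NIfun y + (bEI - bEE) * ν)) / Real.sqrt aI := by ring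
      rw [e1, e2]
      exact aux_K_le ((div_lt_div_iff_of_pos_right hsa).2 (by linarith))
        (div_nonneg (by linarith) hsa.le)
    have hpy : 0 < τI + I2 VR VF bEE bEI bII aI ν y (NIfun y) := by nlinarith
    nlinarith
  -- Ifun positive and strictly decreasing
  have hIpos : ∀ z : ℝ, 0 < Ifun VR VF bEE bEI bII aI ν NIfun z := by
    intro z
    unfold Ifun
    exact aux_J_pos hV hsa _
  have hIanti : ∀ x y : ℝ, 0 ≤ x → x < y →
      Ifun VR VF bEE bEI bII aI ν NIfun y < Ifun VR VF bEE bEI bII aI ν NIfun x := by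
    intro x y hx hxy
    unfold Ifun
    exact aux_J_lt hV hsa (hVmono x y hx hxy)
  -- final part
  intro NE hNE
  obtain ⟨hNE0, hNE1⟩ := hNE
  have hN0 : 0 < NIfun 0 := (hNIfun 0 le_rfl).1.1
  have h01 : NIfun 0 < NIfun NE := hmono 0 NE le_rfl hNE0
  have h12 : NIfun NE < NIfun (1/τE) := hmono NE (1/τE) hNE0.le hNE1
  have hi01 : Ifun VR VF bEE bEI bII aI ν NIfun NE < Ifun VR VF bEE bEI bII aI ν NIfun 0 :=
    hIanti 0 NE le_rfl hNE0
  have hi12 : Ifun VR VF bEE bEI bII aI ν NIfun (1/τE) < Ifun VR VF bEE bEI bII aI ν NIfun NE :=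
    hIanti NE (1/τE) hNE0.le hNE1
  have hi2 : 0 < Ifun VR VF bEE bEI bII aI ν NIfun (1/τE) := hIpos _
  have hD : 0 < bIE / Real.sqrt aE := div_pos hbIE (Real.sqrt_pos.2 haE)
  obtain ⟨hf1, hf2⟩ := aux_frac hbEI hbII hsa hN0 h01 h12 hi2 hi12 hi01
  unfold NIderiv
  exact ⟨add_lt_add_right ((mul_lt_mul_iff_right₀ hD).2 hf1) _,
    add_lt_add_right ((mul_lt_mul_iff_right₀ hD).2 hf2) _⟩
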